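/- For every improper line k (a line entirely contained in W), there exist at least λ+2 proper planes containing k, where λ = ind(P,W). -/

import Mathlib

/-- A projective space of dimension at least 3, given by its point set `S` and its
set of lines: any two points lie on a unique line, the Veblen (Pasch) axiom holds,
and there exist two disjoint lines (dimension ≥ 3). -/
structure ProjSpace (S : Type*) where
  L : Set (Set S)
  two_points : ∀ k ∈ L, ∃ a ∈ k, ∃ b ∈ k, a ≠ b
  unique_meet : ∀ k ∈ L, ∀ l ∈ L, k ≠ l → (k ∩ l).Subsingleton
  join : ∀ a b : S, a ≠ b → ∃ k ∈ L, a ∈ k ∧ b ∈ k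
  veblen : ∀ l₁ ∈ L, ∀ l₂ ∈ L, ∀ l₃ ∈ L, ∀ l₄ ∈ L, ∀ p a b c d : S,
    l₁ ≠ l₂ → p ≠ a → p ≠ b → p ≠ c → p ≠ d →
    p ∈ l₁ → a ∈ l₁ → c ∈ l₁ → p ∈ l₂ → b ∈ l₂ → d ∈ l₂ →
    a ∈ l₃ → b ∈ l₃ → c ∈ l₄ → d ∈ l₄ → (l₃ ∩ l₄).Nonempty
  dim3 : ∃ k ∈ L, ∃ l ∈ L, k ∩ l = ∅

namespace ProjSpace

variable {S : Type*}

/-- A subspace: any line through two of its points is contained in it. -/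
def IsSubspace (P : ProjSpace S) (X : Set S) : Prop :=
  ∀ k ∈ P.L, ∀ a ∈ k, ∀ b ∈ k, a ≠ b → a ∈ X → b ∈ X → k ⊆ X

/-- The subspace spanned by a point set. -/
def span (P : ProjSpace S) (X : Set S) : Set S :=
  ⋂₀ {Y | P.IsSubspace Y ∧ X ⊆ Y}

/-- A plane: the span of a line together with a point outside it. -/
def IsPlane (P : ProjSpace S) (Pl : Set S) : Prop :=
  ∃ k ∈ P.L, ∃ a, a ∉ k ∧ Pl = P.span (insert a k)

/-- `HasIndex P W lam`: some line has exactly `lam` points in `W` and every line not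
contained in `W` has at most `lam` points in `W`. -/
def HasIndex (P : ProjSpace S) (W : Set S) (lam : ℕ) : Prop :=
  (∃ k ∈ P.L, (k ∩ W).encard = (lam : ℕ∞)) ∧
    ∀ k ∈ P.L, ¬ k ⊆ W → (k ∩ W).encard ≤ (lam : ℕ∞)

/-- Three lines form a triangle: pairwise distinct, pairwise intersecting,
not concurrent. -/
def LineTriangle (P : ProjSpace S) (k₁ k₂ k₃ : Set S) : Prop :=
  k₁ ∈ P.L ∧ k₂ ∈ P.L ∧ k₃ ∈ P.L ∧ k₁ ≠ k₂ ∧ k₁ ≠ k₃ ∧ k₂ ≠ k₃ ∧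
    (k₁ ∩ k₂).Nonempty ∧ (k₁ ∩ k₃).Nonempty ∧ (k₂ ∩ k₃).Nonempty ∧
    ¬ (k₁ ∩ k₂ ∩ k₃).Nonempty

/-- Parallelism w.r.t. the horizon `W`: the lines meet, and only inside `W`. -/
def Par (W : Set S) (k₁ k₂ : Set S) : Prop :=
  (k₁ ∩ k₂).Nonempty ∧ k₁ ∩ k₂ ⊆ W

end ProjSpace

namespace PS9

open ProjSpace Set

variable {S : Type*} {P : ProjSpace S}

/-- Uniqueness of the line through two distinct points. -/
theorem line_eq {m m' : Set S} (hm : m ∈ P.L) (hm' : m' ∈ P.L) {a b : S}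
    (hab : a ≠ b) (ham : a ∈ m) (hbm : b ∈ m) (ham' : a ∈ m') (hbm' : b ∈ m') :
    m = m' := by
  by_contra h
  exact hab (P.unique_meet m hm m' hm' h ⟨ham, ham'⟩ ⟨hbm, hbm'⟩)

/-- The cone over the line `k` with apex `p`. -/
def Cone (P : ProjSpace S) (p : S) (k : Set S) : Set S :=
  {y | ∃ x ∈ k, ∃ n ∈ P.L, p ∈ n ∧ x ∈ n ∧ y ∈ n}

theorem apex_mem_cone {p : S} {k : Set S} (hk : k ∈ P.L) (hp : p ∉ k) :
    p ∈ Cone P p k := by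
  obtain ⟨a, ha, -⟩ := P.two_points k hk
  obtain ⟨n, hn, hpn, han⟩ := P.join p a (fun h => hp (h ▸ ha))
  exact ⟨a, ha, n, hn, hpn, han, hpn⟩

theorem base_subset_cone {p : S} {k : Set S} (hp : p ∉ k) :
    k ⊆ Cone P p k := by
  intro x hx
  obtain ⟨n, hn, hpn, hxn⟩ := P.join p x (fun h => hp (h ▸ hx))
  exact ⟨x, hx, n, hn, hpn, hxn, hxn⟩

/-- A line through the apex and a cone point meets the base. -/
theorem cone_line {p : S} {k : Set S} {u : S} (hu : u ∈ Cone P p k) (hup : u ≠ p)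
    {n : Set S} (hn : n ∈ P.L) (hpn : p ∈ n) (hun : u ∈ n) :
    ∃ x ∈ k, x ∈ n := by
  obtain ⟨x, hx, n', hn', hpn', hxn', hun'⟩ := hu
  exact ⟨x, hx, line_eq hn' hn hup.symm hpn' hun' hpn hun ▸ hxn'⟩

/-- A line with two cone points, not through the apex, meets the base. -/
theorem meets_base {p : S} {k : Set S} (hk : k ∈ P.L) (hp : p ∉ k)
    {m : Set S} (hm : m ∈ P.L) (hpm : p ∉ m) (hmk : m ≠ k)
    {u v : S} (hum : u ∈ m) (hvm : v ∈ m) (huv : u ≠ v)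
    (huC : u ∈ Cone P p k) (hvC : v ∈ Cone P p k) :
    (m ∩ k).Nonempty := by
  have hup : u ≠ p := fun h => hpm (h ▸ hum)
  have hvp : v ≠ p := fun h => hpm (h ▸ hvm)
  obtain ⟨xu, hxu, nu, hnu, hpnu, hxunu, hunu⟩ := huC
  obtain ⟨xv, hxv, nv, hnv, hpnv, hxvnv, hvnv⟩ := hvC
  have hxuxv : xu ≠ xv := by
    rintro rfl
    have hpxu : p ≠ xu := fun h => hp (h ▸ hxu)
    have h1 : nu = nv := line_eq hnu hnv hpxu hpnu hxunu hpnv hxvnv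
    have h2 : m = nu := line_eq hm hnu huv hum hvm hunu (h1 ▸ hvnv)
    exact hpm (h2 ▸ hpnu)
  have hnunv : nu ≠ nv := by
    rintro rfl
    have e : nu = k := line_eq hnu hk hxuxv hxunu hxvnv hxu hxv
    exact hp (e ▸ hpnu)
  exact P.veblen nu hnu nv hnv m hm k hk p u v xu xv hnunv hup.symm hvp.symm
    (fun h => hp (h ▸ hxu)) (fun h => hp (h ▸ hxv))
    hpnu hunu hxunu hpnv hvnv hxvnv hum hvm hxu hxv

/-- Helper for the subspace property of cones. -/
theorem cone_step {p : S} {k : Set S} (hk : k ∈ P.L) (hp : p ∉ k)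
    {m : Set S} (hm : m ∈ P.L) (hpm : p ∉ m) (hmk : m ≠ k)
    {z u w : S} (hzm : z ∈ m) (hzk : z ∈ k) (hum : u ∈ m) (huC : u ∈ Cone P p k)
    (huz : u ≠ z) (hwm : w ∈ m) (hwz : w ≠ z) (hwu : w ≠ u) :
    w ∈ Cone P p k := by
  have hup : u ≠ p := fun h => hpm (h ▸ hum)
  obtain ⟨xu, hxu, nu, hnu, hpnu, hxunu, hunu⟩ := huC
  have huxu : u ≠ xu := by
    rintro rfl
    exact huz (P.unique_meet m hm k hk hmk ⟨hum, hxu⟩ ⟨hzm, hzk⟩)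
  have hpw : p ≠ w := fun h => hpm (h ▸ hwm)
  obtain ⟨g, hg, hpg, hwg⟩ := P.join p w hpw
  have hmnu : m ≠ nu := fun h => hpm (h ▸ hpnu)
  have hy : (g ∩ k).Nonempty :=
    P.veblen m hm nu hnu g hg k hk u w p z xu hmnu hwu.symm hup huz huxu
      hum hwm hzm hunu hpnu hxunu hwg hpg hzk hxu
  obtain ⟨y, hyg, hyk⟩ := hy
  exact ⟨y, hyk, g, hg, hpg, hyg, hwg⟩

/-- The cone over a line is a subspace. -/
theorem cone_subspace {p : S} {k : Set S} (hk : k ∈ P.L) (hp : p ∉ k) :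
    P.IsSubspace (Cone P p k) := by
  intro m hm a ham b hbm hab haC hbC w hwm
  by_cases hpm : p ∈ m
  · -- the line goes through the apex
    rcases ne_or_eq a p with hap | rfl
    · obtain ⟨x, hx, hxm⟩ := cone_line haC hap hm hpm ham
      exact ⟨x, hx, m, hm, hpm, hxm, hwm⟩
    · obtain ⟨x, hx, hxm⟩ := cone_line hbC (Ne.symm hab) hm hpm hbm
      exact ⟨x, hx, m, hm, hpm, hxm, hwm⟩
  · by_cases hmk : m = k
    · exact base_subset_cone hp (hmk ▸ hwm)
    · obtain ⟨z, hzm, hzk⟩ := meets_base hk hp hm hpm hmk ham hbm hab haC hbC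
      by_cases hwz : w = z
      · exact base_subset_cone hp (hwz ▸ hzk)
      by_cases hwa : w = a
      · exact hwa ▸ haC
      by_cases hwb : w = b
      · exact hwb ▸ hbC
      rcases ne_or_eq a z with haz | rfl
      · exact cone_step hk hp hm hpm hmk hzm hzk ham haC haz hwm hwz hwa
      · exact cone_step hk hp hm hpm hmk hzm hzk hbm hbC (Ne.symm hab) hwm hwz hwb

theorem subset_span {X : Set S} : X ⊆ P.span X :=
  fun x hx => fun Y hY => hY.2 hx

theorem span_isSubspace {X : Set S} : P.IsSubspace (P.span X) := by
  intro m hm a ham b hbm hab haX hbX w hwm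
  intro Y hY
  exact hY.1 m hm a ham b hbm hab (haX Y hY) (hbX Y hY) hwm

theorem span_subset_cone {p : S} {k : Set S} (hk : k ∈ P.L) (hp : p ∉ k) :
    P.span (insert p k) ⊆ Cone P p k :=
  Set.sInter_subset_of_mem ⟨cone_subspace hk hp,
    Set.insert_subset (apex_mem_cone hk hp) (base_subset_cone hp)⟩

/-- A line in the cone missing the apex meets every line through the apex and the base. -/
theorem meets_coneline {p : S} {k : Set S} (hk : k ∈ P.L) (hp : p ∉ k)
    {g : Set S} (hg : g ∈ P.L) (hpg : p ∉ g) (hgC : g ⊆ Cone P p k)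
    {n : Set S} (hn : n ∈ P.L) (hpn : p ∈ n) {x : S} (hxk : x ∈ k) (hxn : x ∈ n) :
    (g ∩ n).Nonempty := by
  by_cases hgk : g = k
  · exact ⟨x, hgk ▸ hxk, hxn⟩
  obtain ⟨a, ha, b, hb, hab⟩ := P.two_points g hg
  obtain ⟨z, hzg, hzk⟩ := meets_base hk hp hg hpg hgk ha hb hab (hgC ha) (hgC hb)
  obtain ⟨u, hug, huz⟩ : ∃ u ∈ g, u ≠ z := by
    rcases ne_or_eq a z with h | rfl
    · exact ⟨a, ha, h⟩
    · exact ⟨b, hb, Ne.symm hab⟩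
  have hup : u ≠ p := fun h => hpg (h ▸ hug)
  obtain ⟨nu, hnu, hpnu, hunu⟩ := P.join p u (Ne.symm hup)
  obtain ⟨xu, hxuk, hxunu⟩ := cone_line (hgC hug) hup hnu hpnu hunu
  have hunotk : u ∉ k := by
    intro h
    exact huz (P.unique_meet g hg k hk hgk ⟨hug, h⟩ ⟨hzg, hzk⟩)
  have huxu : u ≠ xu := fun h => hunotk (h ▸ hxuk)
  by_cases hxxu : x = xu
  · have hpx : p ≠ x := fun h => hp (h ▸ hxk)
    have : n = nu := line_eq hn hnu hpx hpn hxn hpnu (hxxu ▸ hxunu)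
    exact ⟨u, hug, this ▸ hunu⟩
  by_cases hxz : x = z
  · exact ⟨z, hzg, hxz ▸ hxn⟩
  have hxuz : xu ≠ z := by
    rintro rfl
    exact hpg ((line_eq hnu hg huz hunu hxunu hug hzg) ▸ hpnu)
  have hnuk : nu ≠ k := fun h => hp (h ▸ hpnu)
  exact P.veblen nu hnu k hk g hg n hn xu u z p x hnuk (Ne.symm huxu) hxuz
    (fun h => hp (h.symm ▸ hxuk)) (Ne.symm hxxu)
    hxunu hunu hpnu hxuk hzk hxk hug hzg hpn hxn

/-- Any two lines in a cone meet. -/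
theorem cone_lines_meet {p : S} {k : Set S} (hk : k ∈ P.L) (hp : p ∉ k)
    {g h : Set S} (hg : g ∈ P.L) (hh : h ∈ P.L)
    (hgC : g ⊆ Cone P p k) (hhC : h ⊆ Cone P p k) :
    (g ∩ h).Nonempty := by
  by_cases hpg : p ∈ g
  · by_cases hph : p ∈ h
    · exact ⟨p, hpg, hph⟩
    · -- g through apex: g is a cone line
      obtain ⟨u, hug, huv⟩ : ∃ u ∈ g, u ≠ p := by
        obtain ⟨a, ha, b, hb, hab⟩ := P.two_points g hg
        rcases ne_or_eq a p with h' | rfl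
        · exact ⟨a, ha, h'⟩
        · exact ⟨b, hb, Ne.symm hab⟩
      obtain ⟨x, hxk, hxg⟩ := cone_line (hgC hug) huv hg hpg hug
      obtain ⟨w, hwh, hwg⟩ := meets_coneline hk hp hh hph hhC hg hpg hxk hxg
      exact ⟨w, hwg, hwh⟩
  · by_cases hph : p ∈ h
    · obtain ⟨u, huh, huv⟩ : ∃ u ∈ h, u ≠ p := by
        obtain ⟨a, ha, b, hb, hab⟩ := P.two_points h hh
        rcases ne_or_eq a p with h' | rfl
        · exact ⟨a, ha, h'⟩
        · exact ⟨b, hb, Ne.symm hab⟩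
      obtain ⟨x, hxk, hxh⟩ := cone_line (hhC huh) huv hh hph huh
      obtain ⟨w, hwg, hwh⟩ := meets_coneline hk hp hg hpg hgC hh hph hxk hxh
      exact ⟨w, hwg, hwh⟩
    · obtain ⟨x₁, hx₁, x₂, hx₂, hx12⟩ := P.two_points k hk
      obtain ⟨n₁, hn₁, hpn₁, hx₁n₁⟩ := P.join p x₁ (fun h' => hp (h' ▸ hx₁))
      obtain ⟨n₂, hn₂, hpn₂, hx₂n₂⟩ := P.join p x₂ (fun h' => hp (h' ▸ hx₂))
      obtain ⟨a, hag, han₁⟩ := meets_coneline hk hp hg hpg hgC hn₁ hpn₁ hx₁ hx₁n₁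
      obtain ⟨b, hbg, hbn₂⟩ := meets_coneline hk hp hg hpg hgC hn₂ hpn₂ hx₂ hx₂n₂
      obtain ⟨c, hch, hcn₁⟩ := meets_coneline hk hp hh hph hhC hn₁ hpn₁ hx₁ hx₁n₁
      obtain ⟨d, hdh, hdn₂⟩ := meets_coneline hk hp hh hph hhC hn₂ hpn₂ hx₂ hx₂n₂
      have hn12 : n₁ ≠ n₂ := by
        rintro rfl
        have e : n₁ = k := line_eq hn₁ hk hx12 hx₁n₁ hx₂n₂ hx₁ hx₂
        exact hp (e ▸ hpn₁)
      exact P.veblen n₁ hn₁ n₂ hn₂ g hg h hh p a b c d hn12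
        (fun h' => hpg (h' ▸ hag)) (fun h' => hpg (h' ▸ hbg))
        (fun h' => hph (h' ▸ hch)) (fun h' => hph (h' ▸ hdh))
        hpn₁ han₁ hcn₁ hpn₂ hbn₂ hdn₂ hag hbg hch hdh

/-- Through any point off a line there is a line missing the line entirely. -/
theorem exists_skew {p : S} {k : Set S} (hk : k ∈ P.L) (hp : p ∉ k) :
    ∃ l ∈ P.L, p ∈ l ∧ l ∩ k = ∅ := by
  by_cases hall : ∀ x : S, x ∈ Cone P p k
  · exfalso
    obtain ⟨m₁, hm₁, m₂, hm₂, hdisj⟩ := P.dim3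
    obtain ⟨w, hw₁, hw₂⟩ := cone_lines_meet hk hp hm₁ hm₂
      (fun y _ => hall y) (fun y _ => hall y)
    exact absurd (by rw [← hdisj]; exact ⟨hw₁, hw₂⟩ : w ∈ (∅ : Set S)) (Set.notMem_empty w)
  · push_neg at hall
    obtain ⟨x, hx⟩ := hall
    have hxp : p ≠ x := fun h => hx (h ▸ apex_mem_cone hk hp)
    obtain ⟨l, hl, hpl, hxl⟩ := P.join p x hxp
    refine ⟨l, hl, hpl, ?_⟩
    ext z
    simp only [Set.mem_inter_iff, Set.mem_empty_iff_false, iff_false, not_and]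
    intro hzl hzk
    have hzp : p ≠ z := fun h => hp (h ▸ hzk)
    have : l ⊆ Cone P p k :=
      cone_subspace hk hp l hl p hpl z hzl hzp (apex_mem_cone hk hp)
        (base_subset_cone hp hzk)
    exact hx (this hxl)

end PS9


open ProjSpace in
/-- every improper line is contained in at least `lam + 2` proper planes. -/
theorem many_proper_planes_through_improper_line {S : Type*} (P : ProjSpace S)
    (W : Set S) (lam : ℕ) (hlam : 0 < lam) (hind : P.HasIndex W lam)
    (hsize : ∀ k ∈ P.L, 2 * (lam : ℕ∞) + 2 ≤ k.encard)
    (k : Set S) (hk : k ∈ P.L) (himp : k ⊆ W) :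
    (lam : ℕ∞) + 2 ≤
      {Pl : Set S | P.IsPlane Pl ∧ ¬ Pl ⊆ W ∧ k ⊆ Pl}.encard := by
  classical
  obtain ⟨⟨k₀, hk₀, hk₀W⟩, hmax⟩ := hind
  obtain ⟨p, hpk₀, hpW⟩ : ∃ p ∈ k₀, p ∉ W := by
    by_contra h
    push_neg at h
    have he : k₀ ∩ W = k₀ := Set.inter_eq_left.mpr h
    have h2 := hsize k₀ hk₀
    rw [← he, hk₀W] at h2
    have h3 : (2 * lam + 2 : ℕ) ≤ lam := by exact_mod_cast h2
    omega
  have hpk : p ∉ k := fun h => hpW (himp h)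
  obtain ⟨l, hl, hpl, hlk⟩ := PS9.exists_skew hk hpk
  have hlW : ¬ l ⊆ W := fun h => hpW (h hpl)
  have hcount : (lam : ℕ∞) + 2 ≤ (l \ W).encard := by
    have h1 := hsize l hl
    have h2 := hmax l hl hlW
    have h3 : (l \ W).encard + (l ∩ W).encard = l.encard :=
      Set.encard_diff_add_encard_inter l W
    have h5 : (lam : ℕ∞) + 2 + lam ≤ (l \ W).encard + lam := by
      calc (lam : ℕ∞) + 2 + lam = 2 * lam + 2 := by ring
        _ ≤ l.encard := h1
        _ = (l \ W).encard + (l ∩ W).encard := h3.symm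
        _ ≤ (l \ W).encard + lam := add_le_add_right h2 _
    exact (WithTop.add_le_add_iff_right (by simp : (lam : ℕ∞) ≠ ⊤)).mp h5
  have hqknot : ∀ q ∈ l, q ∉ k := fun q hql hqk =>
    (Set.eq_empty_iff_forall_notMem.mp hlk q) ⟨hql, hqk⟩
  have hinj : Set.InjOn (fun q => P.span (insert q k)) (l \ W) := by
    intro q hq q' hq' hEq
    by_contra hne
    have hqk : q ∉ k := hqknot q hq.1
    have hq'E : q' ∈ P.span (insert q k) := by
      have hEq' : P.span (insert q k) = P.span (insert q' k) := hEq
      rw [hEq']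
      exact PS9.subset_span (Set.mem_insert q' k)
    have hq'C : q' ∈ PS9.Cone P q k := PS9.span_subset_cone hk hqk hq'E
    obtain ⟨x, hxk, hxl⟩ := PS9.cone_line hq'C (Ne.symm hne) hl hq.1 hq'.1
    exact (Set.eq_empty_iff_forall_notMem.mp hlk x) ⟨hxl, hxk⟩
  have hsub : (fun q => P.span (insert q k)) '' (l \ W) ⊆
      {Pl : Set S | P.IsPlane Pl ∧ ¬ Pl ⊆ W ∧ k ⊆ Pl} := by
    rintro - ⟨q, hq, rfl⟩
    refine ⟨⟨k, hk, q, hqknot q hq.1, rfl⟩, ?_, ?_⟩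
    · intro hsubW
      exact hq.2 (hsubW (PS9.subset_span (Set.mem_insert q k)))
    · exact fun x hx => PS9.subset_span (Set.mem_insert_of_mem q hx)
  calc (lam : ℕ∞) + 2 ≤ (l \ W).encard := hcount
    _ = ((fun q => P.span (insert q k)) '' (l \ W)).encard := (hinj.encard_image).symm
    _ ≤ _ := Set.encard_mono hsub
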